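/- Let $\Sigma, \Sigma' \in \mathbb{R}^{p \times p}$ be symmetric positive definite matrices with $\lambda_{\min}(\Sigma') \geq 3/4$, and suppose every eigenvalue of $(\Sigma')^{-1/2}\Sigma(\Sigma')^{-1/2} - I$ lies in $[-1/2, 1/2]$. Then the Kullback–Leibler divergence satisfies $D_{\mathrm{KL}}(\mathcal{N}(0,\Sigma)\,\|\,\mathcal{N}(0,\Sigma')) \leq \frac{16}{9}\|\Sigma - \Sigma'\|_F^2$, where $\|\cdot\|_F$ denotes the Frobenius norm. -/

import Mathlib

section

open scoped ComplexOrder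

/-- The positive semidefinite square root of a positive semidefinite matrix
(the definition of `Matrix.PosSemidef.sqrt` in the older Mathlib, since removed). -/
noncomputable def Matrix.PosSemidef.sqrt {n : Type*} [Fintype n] [DecidableEq n] {𝕜 : Type*}
    [RCLike 𝕜] {A : Matrix n n 𝕜} (hA : A.PosSemidef) : Matrix n n 𝕜 :=
  (hA.1.eigenvectorUnitary : Matrix n n 𝕜) *
    Matrix.diagonal (((↑) : ℝ → 𝕜) ∘ Real.sqrt ∘ hA.1.eigenvalues) *
    (star hA.1.eigenvectorUnitary : Matrix n n 𝕜)

end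

lemma sqrt_isHermitian_aux {n : Type*} [Fintype n] [DecidableEq n]
    {A : Matrix n n ℝ} (hA : A.PosSemidef) : hA.sqrt.IsHermitian := by
  unfold Matrix.PosSemidef.sqrt
  rw [Matrix.star_eq_conjTranspose]
  apply Matrix.isHermitian_mul_mul_conjTranspose
  exact Matrix.isHermitian_diagonal_of_self_adjoint _ (by ext i; simp)

lemma sqrt_mul_self_aux {n : Type*} [Fintype n] [DecidableEq n]
    {A : Matrix n n ℝ} (hA : A.PosSemidef) : hA.sqrt * hA.sqrt = A := by
  unfold Matrix.PosSemidef.sqrt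
  have hU : star (hA.1.eigenvectorUnitary : Matrix n n ℝ) *
      (hA.1.eigenvectorUnitary : Matrix n n ℝ) = 1 :=
    Matrix.mem_unitaryGroup_iff'.mp hA.1.eigenvectorUnitary.2
  conv_rhs => rw [hA.1.spectral_theorem, Unitary.conjStarAlgAut_apply]
  simp only [Matrix.mul_assoc]
  rw [← Matrix.mul_assoc (star _) _ _, hU, Matrix.one_mul, ← Matrix.mul_assoc (Matrix.diagonal _),
    Matrix.diagonal_mul_diagonal]
  congr 3
  ext i
  simp [Real.mul_self_sqrt (hA.eigenvalues_nonneg i)]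

lemma log_aux {x : ℝ} (h1 : -(1/2) ≤ x) (h2 : x ≤ 1/2) :
    x - Real.log (x + 1) ≤ 2 * x ^ 2 := by
  have hpos : (0:ℝ) < x + 1 := by linarith
  have h := Real.log_le_sub_one_of_pos (show (0:ℝ) < (x+1)⁻¹ by positivity)
  rw [Real.log_inv] at h
  have hinv : (x+1) * (x+1)⁻¹ = 1 := mul_inv_cancel₀ hpos.ne'
  have hinvpos : (0:ℝ) < (x+1)⁻¹ := by positivity
  nlinarith [sq_nonneg x, mul_nonneg (sq_nonneg x) (by linarith : (0:ℝ) ≤ 1 + 2*x)]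

set_option maxHeartbeats 1000000 in
theorem kl_gaussian_le_frobenius (p : ℕ)
    (Sig Sig' : Matrix (Fin p) (Fin p) ℝ)
    (hSig : Sig.PosDef) (hSig' : Sig'.PosDef)
    (hmin : ∀ μ ∈ spectrum ℝ Sig', (3 / 4 : ℝ) ≤ μ)
    (heig : ∀ μ ∈ spectrum ℝ
        ((hSig'.posSemidef.sqrt)⁻¹ * Sig * (hSig'.posSemidef.sqrt)⁻¹ - 1),
      μ ∈ Set.Icc (-(1 / 2) : ℝ) (1 / 2)) :
    (1 / 2) * ((Sig'⁻¹ * Sig - 1).trace - Real.log (Sig.det / Sig'.det))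
      ≤ (16 / 9) * ∑ i, ∑ j, (Sig i j - Sig' i j) ^ 2 := by
  classical
  set S : Matrix (Fin p) (Fin p) ℝ := hSig'.posSemidef.sqrt with hSdef
  have hSH : S.IsHermitian := sqrt_isHermitian_aux hSig'.posSemidef
  have hSS : S * S = Sig' := sqrt_mul_self_aux hSig'.posSemidef
  have hdet' : 0 < Sig'.det := hSig'.det_pos
  have hdetS : S.det ≠ 0 := by
    intro h
    rw [← hSS, Matrix.det_mul, h, mul_zero] at hdet'
    exact lt_irrefl _ hdet'
  have hSunit : IsUnit S.det := isUnit_iff_ne_zero.mpr hdetS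
  have hSinv : S⁻¹ * S = 1 := Matrix.nonsing_inv_mul S hSunit
  have hSinv' : S * S⁻¹ = 1 := Matrix.mul_nonsing_inv S hSunit
  have hSinvH : (S⁻¹).IsHermitian := hSH.inv
  have hSig'inv : Sig'⁻¹ = S⁻¹ * S⁻¹ := by rw [← hSS, Matrix.mul_inv_rev]
  set A : Matrix (Fin p) (Fin p) ℝ := Sig - Sig' with hAdef
  have hAH : A.IsHermitian := hSig.1.sub hSig'.1
  set M : Matrix (Fin p) (Fin p) ℝ := S⁻¹ * Sig * S⁻¹ - 1 with hMdef
  have hMH : M.IsHermitian := by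
    have h1 := Matrix.isHermitian_mul_mul_conjTranspose (S⁻¹) hSig.1
    rw [hSinvH.eq] at h1
    exact h1.sub Matrix.isHermitian_one
  set α : Fin p → ℝ := hMH.eigenvalues with hαdef
  have hαmem : ∀ i, α i ∈ Set.Icc (-(1/2):ℝ) (1/2) := fun i =>
    heig _ (hMH.eigenvalues_mem_spectrum_real i)
  have hα1 : ∀ i, -(1/2:ℝ) ≤ α i := fun i => (hαmem i).1
  have hα2 : ∀ i, α i ≤ (1/2:ℝ) := fun i => (hαmem i).2
  -- spectral theorem for M
  set U : Matrix (Fin p) (Fin p) ℝ := (hMH.eigenvectorUnitary : Matrix (Fin p) (Fin p) ℝ)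
    with hUdef
  have hU1 : star U * U = 1 := Matrix.mem_unitaryGroup_iff'.mp hMH.eigenvectorUnitary.2
  have hU2 : U * star U = 1 := Matrix.mem_unitaryGroup_iff.mp hMH.eigenvectorUnitary.2
  have hcancel : ∀ X : Matrix (Fin p) (Fin p) ℝ, star U * (U * X) = X := fun X => by
    rw [← Matrix.mul_assoc, hU1, Matrix.one_mul]
  have hspec : M = U * Matrix.diagonal α * star U := by
    have h := hMH.spectral_theorem
    simpa [RCLike.ofReal_real_eq_id, Function.id_comp] using h
  have htrM : M.trace = ∑ i, α i := by
    conv_lhs => rw [hspec]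
    rw [Matrix.trace_mul_cycle, hU1, Matrix.one_mul, Matrix.trace_diagonal]
  have hMM : M * M = U * Matrix.diagonal (fun i => α i ^ 2) * star U := by
    conv_lhs => rw [hspec]
    have hd : Matrix.diagonal (fun i => α i ^ 2)
        = Matrix.diagonal α * Matrix.diagonal α := by
      rw [Matrix.diagonal_mul_diagonal]
      simp [pow_two]
    rw [hd]
    simp only [Matrix.mul_assoc, hcancel]
  have htrMM : (M * M).trace = ∑ i, α i ^ 2 := by
    rw [hMM, Matrix.trace_mul_cycle, hU1, Matrix.one_mul, Matrix.trace_diagonal]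
  have hM1 : M + 1 = U * Matrix.diagonal (fun i => α i + 1) * star U := by
    have hd : Matrix.diagonal (fun i => α i + 1) = Matrix.diagonal α + 1 := by
      rw [← Matrix.diagonal_one, Matrix.diagonal_add]
    rw [hd, Matrix.mul_add, Matrix.add_mul, Matrix.mul_one, hU2, ← hspec]
  have hdetM1 : (M + 1).det = ∏ i, (α i + 1) := by
    rw [hM1, Matrix.det_mul, Matrix.det_mul, mul_right_comm, ← Matrix.det_mul, hU2,
      Matrix.det_one, one_mul, Matrix.det_diagonal]
  have hM1' : M + 1 = S⁻¹ * Sig * S⁻¹ := by rw [hMdef]; abel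
  have hdetratio : Sig.det / Sig'.det = ∏ i, (α i + 1) := by
    rw [← hdetM1, hM1', Matrix.det_mul, Matrix.det_mul, Matrix.det_nonsing_inv,
      Ring.inverse_eq_inv', ← hSS, Matrix.det_mul]
    field_simp
  have hαpos : ∀ i, (0:ℝ) < α i + 1 := fun i => by have := hα1 i; linarith
  have hlog : Real.log (Sig.det / Sig'.det) = ∑ i, Real.log (α i + 1) := by
    rw [hdetratio, Real.log_prod]
    exact fun i _ => (hαpos i).ne'
  -- the eigenvalue-side bound
  have half_bound : (1 / 2) * ((Sig'⁻¹ * Sig - 1).trace - Real.log (Sig.det / Sig'.det))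
      ≤ ∑ i, α i ^ 2 := by
    have htr : (Sig'⁻¹ * Sig - 1).trace = M.trace := by
      rw [hSig'inv, hMdef, Matrix.trace_sub, Matrix.trace_sub, Matrix.mul_assoc,
        Matrix.trace_mul_cycle, ← Matrix.mul_assoc]
    rw [htr, htrM, hlog, ← Finset.sum_sub_distrib]
    have h1 : ∑ i, (α i - Real.log (α i + 1)) ≤ ∑ i, 2 * α i ^ 2 :=
      Finset.sum_le_sum fun i _ => log_aux (hα1 i) (hα2 i)
    have h2 : ∑ i, (2:ℝ) * α i ^ 2 = 2 * ∑ i, α i ^ 2 := by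
      rw [Finset.mul_sum]
    linarith
  -- diagonalize Sig'
  have hH' : Sig'.IsHermitian := hSig'.1
  set V : Matrix (Fin p) (Fin p) ℝ := (hH'.eigenvectorUnitary : Matrix (Fin p) (Fin p) ℝ)
    with hVdef
  set μ : Fin p → ℝ := hH'.eigenvalues with hμdef
  have hμ : ∀ i, (3/4:ℝ) ≤ μ i := fun i => hmin _ (hH'.eigenvalues_mem_spectrum_real i)
  have hμpos : ∀ i, (0:ℝ) < μ i := fun i => lt_of_lt_of_le (by norm_num) (hμ i)
  have hV1 : star V * V = 1 := Matrix.mem_unitaryGroup_iff'.mp hH'.eigenvectorUnitary.2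
  have hV2 : V * star V = 1 := Matrix.mem_unitaryGroup_iff.mp hH'.eigenvectorUnitary.2
  have hVcancel : ∀ X : Matrix (Fin p) (Fin p) ℝ, star V * (V * X) = X := fun X => by
    rw [← Matrix.mul_assoc, hV1, Matrix.one_mul]
  have hVcancel' : ∀ X : Matrix (Fin p) (Fin p) ℝ, V * (star V * X) = X := fun X => by
    rw [← Matrix.mul_assoc, hV2, Matrix.one_mul]
  have hspec' : Sig' = V * Matrix.diagonal μ * star V := by
    have h := hH'.spectral_theorem
    simpa [RCLike.ofReal_real_eq_id, Function.id_comp] using h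
  have hinv' : Sig'⁻¹ = V * Matrix.diagonal (fun i => (μ i)⁻¹) * star V := by
    apply Matrix.inv_eq_right_inv
    conv_lhs => rw [hspec']
    simp only [Matrix.mul_assoc, hVcancel]
    rw [← Matrix.mul_assoc (Matrix.diagonal μ), Matrix.diagonal_mul_diagonal]
    have hone : (fun i => μ i * (μ i)⁻¹) = fun _ => (1:ℝ) :=
      funext fun i => mul_inv_cancel₀ (hμpos i).ne'
    rw [hone, Matrix.diagonal_one, Matrix.one_mul, hV2]
  set C : Matrix (Fin p) (Fin p) ℝ := star V * (A * V) with hCdef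
  have hconj : ∀ X : Matrix (Fin p) (Fin p) ℝ, X.trace = (star V * X * V).trace := by
    intro X
    rw [Matrix.trace_mul_cycle, hV2, Matrix.one_mul]
  have hMA : M = S⁻¹ * A * S⁻¹ := by
    have h1 : S⁻¹ * Sig' * S⁻¹ = 1 := by
      rw [← hSS]
      calc S⁻¹ * (S * S) * S⁻¹ = (S⁻¹ * S) * (S * S⁻¹) := by
            simp only [Matrix.mul_assoc]
        _ = 1 := by rw [hSinv, hSinv', Matrix.one_mul]
    rw [hMdef, hAdef, Matrix.mul_sub, Matrix.sub_mul, h1]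
  -- trace (M*M) = trace of diagonal-conjugated thing
  set D : Matrix (Fin p) (Fin p) ℝ := Matrix.diagonal (fun i => (μ i)⁻¹) with hDdef
  have step1 : (M * M).trace = (Sig'⁻¹ * (A * (Sig'⁻¹ * A))).trace := by
    rw [hMA]
    have e : (S⁻¹ * A * S⁻¹) * (S⁻¹ * A * S⁻¹) = S⁻¹ * (A * (Sig'⁻¹ * A)) * S⁻¹ := by
      rw [hSig'inv]
      simp only [Matrix.mul_assoc]
    rw [e, Matrix.trace_mul_cycle, ← Matrix.mul_assoc, ← hSig'inv, Matrix.mul_assoc]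
  have step2 : (Sig'⁻¹ * (A * (Sig'⁻¹ * A))).trace = (D * C * (D * C)).trace := by
    rw [hconj (Sig'⁻¹ * (A * (Sig'⁻¹ * A)))]
    congr 1
    rw [hinv']
    simp only [hCdef, hDdef, Matrix.mul_assoc, hVcancel, hVcancel', hV1, Matrix.mul_one]
  have hCH : C.IsHermitian := by
    have h1 := Matrix.isHermitian_mul_mul_conjTranspose (star V) hAH
    rw [Matrix.star_eq_conjTranspose, Matrix.conjTranspose_conjTranspose] at h1
    rw [hCdef, Matrix.star_eq_conjTranspose]
    simpa [Matrix.mul_assoc, Matrix.conjTranspose_eq_transpose_of_trivial] using h1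
  have hCsymm : ∀ i j, C j i = C i j := by
    intro i j
    have := congrFun (congrFun hCH.eq i) j
    simpa [Matrix.conjTranspose_apply] using this
  have hAsymm : ∀ i j, A j i = A i j := by
    intro i j
    have := congrFun (congrFun hAH.eq i) j
    simpa [Matrix.conjTranspose_apply] using this
  have tracemul : ∀ (X Y : Matrix (Fin p) (Fin p) ℝ),
      (X * Y).trace = ∑ i, ∑ j, X i j * Y j i := by
    intro X Y
    simp [Matrix.trace, Matrix.mul_apply]
  have hsum1 : (D * C * (D * C)).trace = ∑ i, ∑ j, (μ i)⁻¹ * (μ j)⁻¹ * (C i j) ^ 2 := by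
    have hentry : ∀ i j, (D * C) i j = (μ i)⁻¹ * C i j := by
      intro i j
      rw [hDdef, Matrix.diagonal_mul]
    rw [tracemul]
    refine Finset.sum_congr rfl fun i _ => Finset.sum_congr rfl fun j _ => ?_
    rw [hentry i j, hentry j i, hCsymm i j]
    ring
  have hsum2 : ∑ i, ∑ j, (μ i)⁻¹ * (μ j)⁻¹ * (C i j) ^ 2
      ≤ (16/9) * ∑ i, ∑ j, (C i j) ^ 2 := by
    rw [Finset.mul_sum]
    refine Finset.sum_le_sum fun i _ => ?_
    rw [Finset.mul_sum]
    refine Finset.sum_le_sum fun j _ => ?_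
    have hi : (μ i)⁻¹ ≤ 4/3 := by
      rw [show (4:ℝ)/3 = (3/4 : ℝ)⁻¹ by norm_num]
      exact inv_anti₀ (by norm_num) (hμ i)
    have hj : (μ j)⁻¹ ≤ 4/3 := by
      rw [show (4:ℝ)/3 = (3/4 : ℝ)⁻¹ by norm_num]
      exact inv_anti₀ (by norm_num) (hμ j)
    have hipos : (0:ℝ) < (μ i)⁻¹ := inv_pos.2 (hμpos i)
    have hjpos : (0:ℝ) < (μ j)⁻¹ := inv_pos.2 (hμpos j)
    have h8 : (μ i)⁻¹ * (μ j)⁻¹ ≤ 16/9 := by nlinarith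
    exact mul_le_mul_of_nonneg_right h8 (sq_nonneg _)
  have hCC : ∑ i, ∑ j, (C i j) ^ 2 = ∑ i, ∑ j, (A i j) ^ 2 := by
    have e1 : ∑ i, ∑ j, (C i j) ^ 2 = (C * C).trace := by
      rw [tracemul]
      refine Finset.sum_congr rfl fun i _ => Finset.sum_congr rfl fun j _ => ?_
      rw [hCsymm i j]
      ring
    have e2 : ∑ i, ∑ j, (A i j) ^ 2 = (A * A).trace := by
      rw [tracemul]
      refine Finset.sum_congr rfl fun i _ => Finset.sum_congr rfl fun j _ => ?_
      rw [hAsymm i j]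
      ring
    rw [e1, e2, hconj (A * A)]
    congr 1
    simp only [hCdef, Matrix.mul_assoc, hVcancel, hVcancel']
  have hRHS : ∑ i, ∑ j, (Sig i j - Sig' i j) ^ 2 = ∑ i, ∑ j, (A i j) ^ 2 := by
    refine Finset.sum_congr rfl fun i _ => Finset.sum_congr rfl fun j _ => ?_
    rw [hAdef, Matrix.sub_apply]
  calc (1 / 2) * ((Sig'⁻¹ * Sig - 1).trace - Real.log (Sig.det / Sig'.det))
      ≤ ∑ i, α i ^ 2 := half_bound
    _ = (M * M).trace := htrMM.symm
    _ = (Sig'⁻¹ * (A * (Sig'⁻¹ * A))).trace := step1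
    _ = (D * C * (D * C)).trace := step2
    _ = ∑ i, ∑ j, (μ i)⁻¹ * (μ j)⁻¹ * (C i j) ^ 2 := hsum1
    _ ≤ (16/9) * ∑ i, ∑ j, (C i j) ^ 2 := hsum2
    _ = (16/9) * ∑ i, ∑ j, (A i j) ^ 2 := by rw [hCC]
    _ = (16 / 9) * ∑ i, ∑ j, (Sig i j - Sig' i j) ^ 2 := by rw [hRHS]
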